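/- arXiv:1507.02923 — 3 statements merged into one kernel-verified Lean document; each statement's English description precedes it below -/
import Mathlib

section
/- Let f ∈ ℂ[x1,…,xn] be an irreducible homogeneous polynomial of degree d ≥ 2 such that Sing(f) = {0}, i.e., the origin is the only point of V(f) at which the gradient of f vanishes. Then the ED data singular locus equals the dual variety: DS(f) = V(f)*. -/
open MvPolynomial Pointwise

/-- Gradient of a multivariate polynomial at a point. -/
noncomputable def grad {n : ℕ} (f : MvPolynomial (Fin n) ℂ) (x : Fin n → ℂ) : Fin n → ℂ :=
  fun i => eval x (pderiv i f)

/-- Zariski closure: zero locus of the ideal of all polynomials vanishing on `S`. -/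
def zclosure {σ : Type} (S : Set (σ → ℂ)) : Set (σ → ℂ) :=
  {x | ∀ p : MvPolynomial σ ℂ, (∀ s ∈ S, eval s p = 0) → eval x p = 0}

/-- Zero locus `V(f)`. -/
def Vp {n : ℕ} (f : MvPolynomial (Fin n) ℂ) : Set (Fin n → ℂ) := {x | eval x f = 0}

/-- Regular locus. -/
def RegL {n : ℕ} (f : MvPolynomial (Fin n) ℂ) : Set (Fin n → ℂ) :=
  {x | eval x f = 0 ∧ grad f x ≠ 0}

/-- Singular locus. -/
def SingL {n : ℕ} (f : MvPolynomial (Fin n) ℂ) : Set (Fin n → ℂ) :=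
  {x | eval x f = 0 ∧ grad f x = 0}

/-- ED correspondence: Zariski closure of pairs (u,x), x regular, u - x ∈ ℂ·∇f(x),
encoded as functions on `Fin n ⊕ Fin n`. -/
def EDcorr {n : ℕ} (f : MvPolynomial (Fin n) ℂ) : Set ((Fin n ⊕ Fin n) → ℂ) :=
  zclosure {w | ∃ u x : Fin n → ℂ, w = Sum.elim u x ∧ x ∈ RegL f ∧ ∃ t : ℂ, u - x = t • grad f x}

/-- ED data singular locus. -/
def DS {n : ℕ} (f : MvPolynomial (Fin n) ℂ) : Set (Fin n → ℂ) :=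
  {u | ∃ x, Sum.elim u x ∈ EDcorr f ∧ x ∈ SingL f}

/-- Dual variety. -/
def dualV {n : ℕ} (f : MvPolynomial (Fin n) ℂ) : Set (Fin n → ℂ) :=
  zclosure {y | ∃ (t : ℂ) (x : Fin n → ℂ), x ∈ RegL f ∧ y = t • grad f x}

/-- Isotropic quadric. -/
def isoQ (n : ℕ) : Set (Fin n → ℂ) := {x | ∑ i, (x i) ^ 2 = 0}

/-- ED data isotropic locus. -/
def DI {n : ℕ} (f : MvPolynomial (Fin n) ℂ) : Set (Fin n → ℂ) :=
  {u | ∃ x, Sum.elim u x ∈ EDcorr f ∧ x ∈ isoQ n ∩ Vp f}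

/-- Zariski-closed sets. -/
def IsZClosed {σ : Type} (S : Set (σ → ℂ)) : Prop := zclosure S = S

/-- Irreducibility with respect to Zariski-closed sets. -/
def IsZIrreducible {σ : Type} (S : Set (σ → ℂ)) : Prop :=
  S.Nonempty ∧ ∀ C₁ C₂ : Set (σ → ℂ), IsZClosed C₁ → IsZClosed C₂ →
    S ⊆ C₁ ∪ C₂ → S ⊆ C₁ ∨ S ⊆ C₂

/-- `C` is an irreducible component of `S`. -/
def IsIrredComponentOf {σ : Type} (C S : Set (σ → ℂ)) : Prop :=
  C ⊆ S ∧ IsZClosed C ∧ IsZIrreducible C ∧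
    ∀ C' : Set (σ → ℂ), IsZClosed C' → IsZIrreducible C' → C ⊆ C' → C' ⊆ S → C' = C



section Aux

open Polynomial in
/-- Evaluation of a homogeneous polynomial at a scaled point. -/
lemma eval_smul_of_isHomogeneous {n m : ℕ} {φ : MvPolynomial (Fin n) ℂ}
    (hφ : φ.IsHomogeneous m) (s : ℂ) (x : Fin n → ℂ) :
    MvPolynomial.eval (s • x) φ = s ^ m * MvPolynomial.eval x φ := by
  rw [MvPolynomial.eval_eq, MvPolynomial.eval_eq, Finset.mul_sum]
  apply Finset.sum_congr rfl
  intro dd hdd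
  have hc : MvPolynomial.coeff dd φ ≠ 0 := (MvPolynomial.mem_support_iff).mp hdd
  have hdeg : Finsupp.degree dd = m := by
    have := hφ hc
    rw [Finsupp.degree_eq_weight_one]; exact this
  have h1 : ∀ i ∈ dd.support, (s • x) i ^ dd i = s ^ dd i * x i ^ dd i := by
    intro i _; simp [mul_pow]
  rw [Finset.prod_congr rfl h1, Finset.prod_mul_distrib, Finset.prod_pow_eq_pow_sum]
  have : ∑ i ∈ dd.support, dd i = m := hdeg
  rw [this]; ring

lemma pderiv_isHomogeneous {n d : ℕ} {f : MvPolynomial (Fin n) ℂ}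
    (hf : f.IsHomogeneous d) (i : Fin n) :
    (MvPolynomial.pderiv i f).IsHomogeneous (d - 1) := by
  classical
  have hrepr : MvPolynomial.pderiv i f
      = ∑ s ∈ f.support,
          MvPolynomial.monomial (s - Finsupp.single i 1) (MvPolynomial.coeff s f * s i) := by
    conv_lhs => rw [f.as_sum]
    rw [map_sum]
    exact Finset.sum_congr rfl fun s _ => MvPolynomial.pderiv_monomial
  rw [hrepr]
  apply MvPolynomial.IsHomogeneous.sum
  intro s hs
  by_cases h : s i = 0
  · rw [h]
    simp only [Nat.cast_zero, mul_zero, map_zero]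
    exact MvPolynomial.isHomogeneous_zero _ _ _
  · apply MvPolynomial.isHomogeneous_monomial
    have hc : MvPolynomial.coeff s f ≠ 0 := (MvPolynomial.mem_support_iff).mp hs
    have hdeg : Finsupp.degree s = d := by
      have := hf hc
      rw [Finsupp.degree_eq_weight_one]; exact this
    have hle : Finsupp.single i 1 ≤ s := Finsupp.single_le_iff.mpr (Nat.one_le_iff_ne_zero.mpr h)
    have hadd : (s - Finsupp.single i 1) + Finsupp.single i 1 = s := tsub_add_cancel_of_le hle
    have hdeg1 : Finsupp.degree (Finsupp.single i 1) = 1 := by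
      exact Finsupp.degree_single i 1
    have hadd' : Finsupp.degree ((s - Finsupp.single i 1) + Finsupp.single i 1)
        = Finsupp.degree (s - Finsupp.single i 1) + Finsupp.degree (Finsupp.single i 1) := by
      simp only [Finsupp.degree_eq_weight_one]
      exact map_add _ _ _
    rw [← hadd, hadd', hdeg1] at hdeg
    omega

/-- Key lemma: for any polynomial vanishing on the ED correspondence generating set,
it vanishes at `(t • grad f x, 0)` for `x` regular. -/
lemma eval_elim_grad_zero {n d : ℕ} {f : MvPolynomial (Fin n) ℂ} (hf : f.IsHomogeneous d)
    (p : MvPolynomial (Fin n ⊕ Fin n) ℂ)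
    (hp : ∀ w ∈ {w : (Fin n ⊕ Fin n) → ℂ | ∃ u x : Fin n → ℂ, w = Sum.elim u x ∧ x ∈ RegL f ∧
        ∃ t : ℂ, u - x = t • grad f x}, MvPolynomial.eval w p = 0)
    (t : ℂ) (x : Fin n → ℂ) (hx : x ∈ RegL f) :
    MvPolynomial.eval (Sum.elim (t • grad f x) 0) p = 0 := by
  classical
  set φ : (Fin n ⊕ Fin n) → Polynomial ℂ :=
    Sum.elim (fun i => Polynomial.C (x i) * Polynomial.X + Polynomial.C (t * grad f x i))
      (fun i => Polynomial.C (x i) * Polynomial.X) with hφ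
  set P : Polynomial ℂ := MvPolynomial.eval₂ Polynomial.C φ p with hP
  have hevalP : ∀ s : ℂ, Polynomial.eval s P
      = MvPolynomial.eval (Sum.elim (s • x + t • grad f x) (s • x)) p := by
    intro s
    have h := MvPolynomial.eval₂_comp_left (Polynomial.evalRingHom s) Polynomial.C φ p
    have hid : (Polynomial.evalRingHom s).comp Polynomial.C = RingHom.id ℂ := by
      ext a; simp
    rw [hid] at h
    have : (Polynomial.evalRingHom s) ∘ φ = Sum.elim (s • x + t • grad f x) (s • x) := by
      funext v; cases v with
      | inl i =>
        show Polynomial.eval s (Polynomial.C (x i) * Polynomial.X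
          + Polynomial.C (t * grad f x i)) = _
        simp only [Polynomial.eval_add, Polynomial.eval_mul, Polynomial.eval_C, Polynomial.eval_X,
          Sum.elim_inl, Pi.add_apply, Pi.smul_apply, smul_eq_mul]
        ring
      | inr i =>
        show Polynomial.eval s (Polynomial.C (x i) * Polynomial.X) = _
        simp only [Polynomial.eval_mul, Polynomial.eval_C, Polynomial.eval_X,
          Sum.elim_inr, Pi.smul_apply, smul_eq_mul]
        ring
    rw [this, MvPolynomial.eval₂_id] at h
    exact h
  have hroot : ∀ s : ℂ, s ≠ 0 → Polynomial.eval s P = 0 := by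
    intro s hs
    rw [hevalP s]
    apply hp
    refine ⟨s • x + t • grad f x, s • x, rfl, ?_, t / s ^ (d - 1), ?_⟩
    · constructor
      · rw [eval_smul_of_isHomogeneous hf s x, hx.1, mul_zero]
      · have hg : grad f (s • x) = s ^ (d - 1) • grad f x := by
          funext i
          simp only [grad, Pi.smul_apply, smul_eq_mul]
          exact eval_smul_of_isHomogeneous (pderiv_isHomogeneous hf i) s x
        rw [hg]
        intro hzero
        exact hx.2 (by
          have hsne : (s : ℂ) ^ (d - 1) ≠ 0 := pow_ne_zero _ hs
          funext i
          have := congrFun hzero i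
          simp only [Pi.smul_apply, smul_eq_mul, Pi.zero_apply] at this
          have := (mul_eq_zero.mp this).resolve_left hsne
          simpa using this)
    · have hg : grad f (s • x) = s ^ (d - 1) • grad f x := by
        funext i
        simp only [grad, Pi.smul_apply, smul_eq_mul]
        exact eval_smul_of_isHomogeneous (pderiv_isHomogeneous hf i) s x
      rw [hg, add_sub_cancel_left, smul_smul]
      congr 1
      field_simp
  have hPzero : P = 0 := by
    apply Polynomial.eq_zero_of_infinite_isRoot
    apply Set.Infinite.mono (s := {s : ℂ | s ≠ 0})
    · intro s hs; exact hroot s hs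
    · exact Set.Finite.infinite_compl (Set.finite_singleton 0)
  have := hevalP 0
  rw [hPzero] at this
  simp only [Polynomial.eval_zero] at this
  have h0 : Sum.elim ((0:ℂ) • x + t • grad f x) ((0:ℂ) • x)
      = Sum.elim (t • grad f x) (0 : Fin n → ℂ) := by
    funext v; cases v <;> simp
  rw [h0] at this
  exact this.symm

/-- Pull back evaluation through a variable substitution. -/
lemma eval_eval₂_C {σ τ : Type} (g : σ → MvPolynomial τ ℂ) (r : MvPolynomial σ ℂ)
    (w : τ → ℂ) :
    MvPolynomial.eval w (MvPolynomial.eval₂ MvPolynomial.C g r)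
      = MvPolynomial.eval (fun i => MvPolynomial.eval w (g i)) r := by
  rw [← MvPolynomial.eval_assoc]
  rfl

end Aux

/-- Corollary: if the only singular point of the affine cone `V(f)` is the origin,
then the ED data singular locus equals the dual variety. -/
theorem DS_eq_dual_of_sing_origin {n d : ℕ} (hd : 2 ≤ d) (f : MvPolynomial (Fin n) ℂ)
    (hf : f.IsHomogeneous d) (hirr : Irreducible f)
    (hsing : SingL f = {0}) :
    DS f = dualV f := by
  ext u
  constructor
  · rintro ⟨x, hE, hxS⟩
    have hx0 : x = 0 := by rw [hsing] at hxS; exact hxS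
    subst hx0
    intro r hr
    set p : MvPolynomial (Fin n ⊕ Fin n) ℂ :=
      MvPolynomial.eval₂ MvPolynomial.C
        (fun i => MvPolynomial.X (Sum.inl i) - MvPolynomial.X (Sum.inr i)) r with hp
    have hpe : ∀ w : (Fin n ⊕ Fin n) → ℂ,
        MvPolynomial.eval w p = MvPolynomial.eval (fun i => w (Sum.inl i) - w (Sum.inr i)) r := by
      intro w
      rw [hp, eval_eval₂_C]
      simp
    have hvan : MvPolynomial.eval (Sum.elim u 0) p = 0 := by
      apply hE p
      rintro w ⟨u', x', rfl, hreg, t, ht⟩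
      rw [hpe]
      have : (fun i => Sum.elim u' x' (Sum.inl i) - Sum.elim u' x' (Sum.inr i)) = u' - x' := by
        funext i; rfl
      rw [this, ht]
      exact hr _ ⟨t, x', hreg, rfl⟩
    rw [hpe] at hvan
    have : (fun i => Sum.elim u (0 : Fin n → ℂ) (Sum.inl i)
        - Sum.elim u (0 : Fin n → ℂ) (Sum.inr i)) = u := by
      funext i; simp
    rwa [this] at hvan
  · intro hu
    refine ⟨0, ?_, by rw [hsing]; rfl⟩
    intro p hp
    set q : MvPolynomial (Fin n) ℂ :=
      MvPolynomial.eval₂ MvPolynomial.C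
        (Sum.elim MvPolynomial.X (fun _ => 0)) p with hq
    have hqe : ∀ y : Fin n → ℂ,
        MvPolynomial.eval y q = MvPolynomial.eval (Sum.elim y 0) p := by
      intro y
      have hfun : (fun v : Fin n ⊕ Fin n => MvPolynomial.eval y
          (Sum.elim MvPolynomial.X (fun _ => (0 : MvPolynomial (Fin n) ℂ)) v))
          = Sum.elim y (0 : Fin n → ℂ) := by
        funext v; cases v <;> simp
      rw [hq, eval_eval₂_C, hfun]
    have hqvan : ∀ y ∈ {y : Fin n → ℂ | ∃ (t : ℂ) (x : Fin n → ℂ), x ∈ RegL f ∧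
        y = t • grad f x}, MvPolynomial.eval y q = 0 := by
      rintro y ⟨t, x, hxreg, rfl⟩
      rw [hqe]
      exact eval_elim_grad_zero hf p hp t x hxreg
    have := hu q hqvan
    rwa [hqe] at this
end

section
/- Let f = x1³ + x2²x3 ∈ ℂ[x1,x2,x3] (the cuspidal cubic cone). Then the ED data singular locus DS(f) equals the hypersurface V(x1·(4x1³ − 27x2²x3)) = {u ∈ ℂ³ : u1·(4u1³ − 27u2²u3) = 0}; in particular the dual variety V(4x1³ − 27x2²x3) is an irreducible component of DS(f). -/
open MvPolynomial Pointwise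

/-! ### Auxiliary lemmas -/

lemma subset_zclosure {σ : Type} (S : Set (σ → ℂ)) : S ⊆ zclosure S :=
  fun x hx _p hp => hp x hx

lemma zclosure_subset_closed {σ : Type} {S C : Set (σ → ℂ)} (hSC : S ⊆ C) (hC : IsZClosed C) :
    zclosure S ⊆ C := by
  intro x hx
  rw [← hC]
  intro p hp
  exact hx p (fun s hs => hp s (hSC hs))

lemma isZClosed_V {σ : Type} (h : MvPolynomial σ ℂ) : IsZClosed {x | eval x h = 0} := by
  apply subset_antisymm
  · intro x hx
    exact hx h (fun s hs => hs)
  · exact subset_zclosure _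

lemma curve_mem_zclosure {σ : Type} (S : Set (σ → ℂ)) (γ : ℂ → σ → ℂ)
    (hc : ∀ i, Continuous fun s => γ s i) (hS : ∀ s : ℂ, s ≠ 0 → γ s ∈ S) :
    γ 0 ∈ zclosure S := by
  intro p hp
  have hcont : Continuous fun s : ℂ => eval (γ s) p :=
    (MvPolynomial.continuous_eval p).comp (continuous_pi hc)
  have h0 : (fun s : ℂ => eval (γ s) p) = fun _ => (0 : ℂ) :=
    Continuous.ext_on (dense_compl_singleton 0) hcont continuous_const
      (fun s hs => hp _ (hS s hs))
  exact congrFun h0 0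

lemma grad_fcc (x : Fin 3 → ℂ) (i : Fin 3) :
    grad (X 0 ^ 3 + X 1 ^ 2 * X 2 : MvPolynomial (Fin 3) ℂ) x i =
      ![3 * x 0 ^ 2, 2 * (x 1 * x 2), x 1 ^ 2] i := by
  fin_cases i <;>
    simp [grad, pderiv_mul, pderiv_pow, pderiv_X_self, pderiv_X_of_ne] <;> ring

lemma eval_fcc (x : Fin 3 → ℂ) :
    eval x (X 0 ^ 3 + X 1 ^ 2 * X 2 : MvPolynomial (Fin 3) ℂ) = x 0 ^ 3 + x 1 ^ 2 * x 2 := by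
  simp

/-- Helper: membership in the ED correspondence via a polynomial curve of regular points. -/
lemma mem_EDcorr_of_curve (u x : Fin 3 → ℂ) (uc xc : ℂ → Fin 3 → ℂ) (tc : ℂ → ℂ)
    (hcu : ∀ i, Continuous fun s => uc s i) (hcx : ∀ i, Continuous fun s => xc s i)
    (hu : uc 0 = u) (hx : xc 0 = x)
    (hreg : ∀ s : ℂ, s ≠ 0 → xc s ∈ RegL (X 0 ^ 3 + X 1 ^ 2 * X 2 : MvPolynomial (Fin 3) ℂ))
    (hts : ∀ s : ℂ, s ≠ 0 → uc s - xc s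
        = tc s • grad (X 0 ^ 3 + X 1 ^ 2 * X 2 : MvPolynomial (Fin 3) ℂ) (xc s)) :
    Sum.elim u x ∈ EDcorr (X 0 ^ 3 + X 1 ^ 2 * X 2 : MvPolynomial (Fin 3) ℂ) := by
  unfold EDcorr
  have key := curve_mem_zclosure
      {w : Fin 3 ⊕ Fin 3 → ℂ | ∃ u x : Fin 3 → ℂ, w = Sum.elim u x ∧
        x ∈ RegL (X 0 ^ 3 + X 1 ^ 2 * X 2 : MvPolynomial (Fin 3) ℂ) ∧
        ∃ t : ℂ, u - x = t • grad (X 0 ^ 3 + X 1 ^ 2 * X 2 : MvPolynomial (Fin 3) ℂ) x}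
      (fun s => Sum.elim (uc s) (xc s)) ?_ ?_
  · rw [hu, hx] at key
    exact key
  · rintro (i | i)
    · exact hcu i
    · exact hcx i
  · intro s hs
    exact ⟨uc s, xc s, rfl, hreg s hs, tc s, hts s hs⟩

lemma DS_sub : DS (X 0 ^ 3 + X 1 ^ 2 * X 2 : MvPolynomial (Fin 3) ℂ) ⊆
    {u : Fin 3 → ℂ | u 0 * (4 * u 0 ^ 3 - 27 * u 1 ^ 2 * u 2) = 0} := by
  set f : MvPolynomial (Fin 3) ℂ := X 0 ^ 3 + X 1 ^ 2 * X 2 with hfdef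
  rintro u ⟨x, hE, hxf, hgrad⟩
  -- x 0 = 0 and x 1 = 0 from vanishing gradient
  have h0 : x 0 = 0 := by
    have h := congrFun hgrad 0
    rw [grad_fcc] at h
    simpa using h
  have h1 : x 1 = 0 := by
    have h := congrFun hgrad 2
    rw [grad_fcc] at h
    simpa using h
  -- two polynomials vanishing on the ED parameter set
  set q1 : MvPolynomial (Fin 3 ⊕ Fin 3) ℂ :=
    X (Sum.inr 1) * (X (Sum.inl 1) - X (Sum.inr 1)) -
      C 2 * X (Sum.inr 2) * (X (Sum.inl 2) - X (Sum.inr 2)) with hq1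
  set q7 : MvPolynomial (Fin 3 ⊕ Fin 3) ℂ :=
    C 4 * (X (Sum.inl 0) - X (Sum.inr 0)) ^ 3 -
      C 27 * (X (Sum.inl 1) - X (Sum.inr 1)) ^ 2 * (X (Sum.inl 2) - X (Sum.inr 2)) with hq7
  have e1 := hE q1 ?_
  have e7 := hE q7 ?_
  · -- conclude
    rw [hq1] at e1
    rw [hq7] at e7
    simp only [eval_sub, eval_mul, eval_pow, eval_X, eval_C, Sum.elim_inl, Sum.elim_inr] at e1 e7
    rw [h0] at e7
    rw [h1] at e1 e7
    have e1' : x 2 * (u 2 - x 2) = 0 := by linear_combination (-1/2 : ℂ) * e1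
    rcases mul_eq_zero.mp e1' with h2 | h2
    · show u 0 * _ = 0
      rw [h2] at e7
      linear_combination u 0 * e7
    · have hu2 : u 2 = x 2 := by linear_combination h2
      have : u 0 ^ 3 = 0 := by
        rw [hu2] at e7
        linear_combination (1/4 : ℂ) * e7
      have hu0 : u 0 = 0 := pow_eq_zero_iff (by norm_num) |>.mp this
      show u 0 * _ = 0
      rw [hu0, zero_mul]
  · -- q7 vanishes on param set
    rintro w ⟨u', x', rfl, ⟨hx'f, -⟩, t, ht⟩
    have hc : ∀ i, u' i = x' i + t * (![3 * x' 0 ^ 2, 2 * (x' 1 * x' 2), x' 1 ^ 2] i) := by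
      intro i
      have := congrFun ht i
      simp only [Pi.sub_apply, Pi.smul_apply, smul_eq_mul] at this
      rw [grad_fcc] at this
      linear_combination this
    have c0 := hc 0; have c1 := hc 1; have c2 := hc 2
    simp only [Matrix.cons_val_zero, Matrix.cons_val_one, Matrix.head_cons,
      Matrix.cons_val_two, Matrix.tail_cons] at c0 c1 c2
    have hf0 : x' 0 ^ 3 + x' 1 ^ 2 * x' 2 = 0 := by
      rw [hfdef] at hx'f
      simpa using hx'f
    rw [hq7]
    simp only [eval_sub, eval_mul, eval_pow, eval_X, eval_C, Sum.elim_inl, Sum.elim_inr]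
    rw [c0, c1, c2]
    ring_nf
    linear_combination (108 * t ^ 3 * (x' 0 ^ 3 - x' 1 ^ 2 * x' 2)) * hf0
  · -- q1 vanishes on param set
    rintro w ⟨u', x', rfl, ⟨hx'f, -⟩, t, ht⟩
    have hc : ∀ i, u' i = x' i + t * (![3 * x' 0 ^ 2, 2 * (x' 1 * x' 2), x' 1 ^ 2] i) := by
      intro i
      have := congrFun ht i
      simp only [Pi.sub_apply, Pi.smul_apply, smul_eq_mul] at this
      rw [grad_fcc] at this
      linear_combination this
    have c0 := hc 0; have c1 := hc 1; have c2 := hc 2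
    simp only [Matrix.cons_val_zero, Matrix.cons_val_one, Matrix.head_cons,
      Matrix.cons_val_two, Matrix.tail_cons] at c0 c1 c2
    rw [hq1]
    simp only [eval_sub, eval_mul, eval_pow, eval_X, eval_C, Sum.elim_inl, Sum.elim_inr]
    rw [c1, c2]
    ring

lemma case_A1 (u : Fin 3 → ℂ) (hu0 : u 0 = 0) (hu2 : u 2 ≠ 0) :
    u ∈ DS (X 0 ^ 3 + X 1 ^ 2 * X 2 : MvPolynomial (Fin 3) ℂ) := by
  refine ⟨![0, 0, u 2], ?_, ?_, ?_⟩
  · refine mem_EDcorr_of_curve u ![0, 0, u 2]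
      (fun s => ![3 * (u 1 * s) / 2 - u 2 * s ^ 2, u 1 + u 2 * s ^ 3, u 2 + u 1 * s ^ 3 / 2])
      (fun s => ![-(u 2 * s ^ 2), u 2 * s ^ 3, u 2])
      (fun s => u 1 / (2 * u 2 ^ 2 * s ^ 3)) ?_ ?_ ?_ ?_ ?_ ?_
    · intro i; fin_cases i <;> simp <;> fun_prop
    · intro i; fin_cases i <;> simp <;> fun_prop
    · funext i; fin_cases i <;> simp [hu0]
    · funext i; fin_cases i <;> simp
    · intro s hs
      constructor
      · rw [eval_fcc]; simp; ring
      · intro hg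
        have h2 := congrFun hg 2
        rw [grad_fcc] at h2
        simp only [Fin.reduceFinMk, Matrix.cons_val_two, Matrix.tail_cons, Matrix.head_cons, Pi.zero_apply] at h2
        have hbs := pow_eq_zero_iff (two_ne_zero) |>.mp h2
        rcases mul_eq_zero.mp hbs with h | h
        · exact hu2 h
        · exact hs (pow_eq_zero_iff (by norm_num) |>.mp h)
    · intro s hs
      have hD : (2 : ℂ) * u 2 ^ 2 * s ^ 3 ≠ 0 :=
        mul_ne_zero (mul_ne_zero two_ne_zero (pow_ne_zero _ hu2)) (pow_ne_zero _ hs)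
      funext i
      simp only [Pi.sub_apply, Pi.smul_apply, smul_eq_mul, grad_fcc]
      fin_cases i <;>
        simp only [Fin.reduceFinMk, Matrix.cons_val_zero, Matrix.cons_val_one, Matrix.head_cons,
          Matrix.cons_val_two, Matrix.tail_cons] <;>
        rw [div_mul_eq_mul_div, eq_div_iff hD] <;> ring
  · rw [eval_fcc]; simp
  · funext i
    rw [grad_fcc]
    fin_cases i <;> simp

lemma case_A2 (u : Fin 3 → ℂ) (hu0 : u 0 = 0) (hu2 : u 2 = 0) :
    u ∈ DS (X 0 ^ 3 + X 1 ^ 2 * X 2 : MvPolynomial (Fin 3) ℂ) := by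
  refine ⟨![0, 0, 0], ?_, ?_, ?_⟩
  · refine mem_EDcorr_of_curve u ![0, 0, 0]
      (fun s => ![-s ^ 4 + 3 * (u 1 * s) / 2, u 1 + s ^ 5, s ^ 2 + u 1 * s ^ 3 / 2])
      (fun s => ![-s ^ 4, s ^ 5, s ^ 2])
      (fun s => u 1 / (2 * s ^ 7)) ?_ ?_ ?_ ?_ ?_ ?_
    · intro i; fin_cases i <;> simp <;> fun_prop
    · intro i; fin_cases i <;> simp <;> fun_prop
    · funext i; fin_cases i <;> simp [hu0, hu2]
    · funext i; fin_cases i <;> simp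
    · intro s hs
      constructor
      · rw [eval_fcc]; simp; ring
      · intro hg
        have h2 := congrFun hg 2
        rw [grad_fcc] at h2
        simp only [Fin.reduceFinMk, Matrix.cons_val_two, Matrix.tail_cons, Matrix.head_cons, Pi.zero_apply] at h2
        have hbs := pow_eq_zero_iff (two_ne_zero) |>.mp h2
        exact hs (pow_eq_zero_iff (by norm_num) |>.mp hbs)
    · intro s hs
      have hD : (2 : ℂ) * s ^ 7 ≠ 0 := mul_ne_zero two_ne_zero (pow_ne_zero _ hs)
      funext i
      simp only [Pi.sub_apply, Pi.smul_apply, smul_eq_mul, grad_fcc]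
      fin_cases i <;>
        simp only [Fin.reduceFinMk, Matrix.cons_val_zero, Matrix.cons_val_one, Matrix.head_cons,
          Matrix.cons_val_two, Matrix.tail_cons] <;>
        rw [div_mul_eq_mul_div, eq_div_iff hD] <;> ring
  · rw [eval_fcc]; simp
  · funext i
    rw [grad_fcc]
    fin_cases i <;> simp

lemma case_B (u : Fin 3 → ℂ) (hu0 : u 0 ≠ 0)
    (hg : 4 * u 0 ^ 3 - 27 * u 1 ^ 2 * u 2 = 0) :
    u ∈ DS (X 0 ^ 3 + X 1 ^ 2 * X 2 : MvPolynomial (Fin 3) ℂ) := by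
  have hu1 : u 1 ≠ 0 := by
    intro h
    apply hu0
    have h3 : u 0 ^ 3 = 0 := by rw [h] at hg; linear_combination (1/4 : ℂ) * hg
    exact pow_eq_zero_iff (by norm_num) |>.mp h3
  have hu2 : u 2 ≠ 0 := by
    intro h
    apply hu0
    have h3 : u 0 ^ 3 = 0 := by rw [h] at hg; linear_combination (1/4 : ℂ) * hg
    exact pow_eq_zero_iff (by norm_num) |>.mp h3
  refine ⟨![0, 0, 0], ?_, ?_, ?_⟩
  · refine mem_EDcorr_of_curve u ![0, 0, 0]
      (fun s => ![u 0 + s * (-(3 * u 1 ^ 2 * u 2)), u 1 + s * (2 * u 0 * u 2 * u 1),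
        u 2 + s * (u 0 * u 1 ^ 2)])
      (fun s => ![s * (-(3 * u 1 ^ 2 * u 2)), s * (2 * u 0 * u 2 * u 1), s * (u 0 * u 1 ^ 2)])
      (fun s => 1 / (4 * u 0 ^ 2 * u 1 ^ 2 * u 2 * s ^ 2)) ?_ ?_ ?_ ?_ ?_ ?_
    · intro i; fin_cases i <;> simp <;> fun_prop
    · intro i; fin_cases i <;> simp <;> fun_prop
    · funext i; fin_cases i <;> simp
    · funext i; fin_cases i <;> simp
    · intro s hs
      constructor
      · rw [eval_fcc]
        simp only [Fin.reduceFinMk, Matrix.cons_val_zero, Matrix.cons_val_one, Matrix.head_cons,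
          Matrix.cons_val_two, Matrix.tail_cons]
        linear_combination (s ^ 3 * u 1 ^ 4 * u 2 ^ 2) * hg
      · intro hgr
        have h2 := congrFun hgr 2
        rw [grad_fcc] at h2
        simp only [Fin.reduceFinMk, Matrix.cons_val_two, Matrix.tail_cons, Matrix.head_cons, Pi.zero_apply] at h2
        have hbs := pow_eq_zero_iff (two_ne_zero) |>.mp h2
        rcases mul_eq_zero.mp hbs with h | h
        · exact hs h
        · rcases mul_eq_zero.mp h with h' | h'
          · rcases mul_eq_zero.mp h' with h'' | h''
            · rcases mul_eq_zero.mp h'' with h3 | h3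
              · norm_num at h3
              · exact hu0 h3
            · exact hu2 h''
          · exact hu1 h'
    · intro s hs
      have hD : (4 : ℂ) * u 0 ^ 2 * u 1 ^ 2 * u 2 * s ^ 2 ≠ 0 := by
        refine mul_ne_zero (mul_ne_zero (mul_ne_zero (mul_ne_zero ?_ ?_) ?_) ?_) ?_
        · norm_num
        · exact pow_ne_zero _ hu0
        · exact pow_ne_zero _ hu1
        · exact hu2
        · exact pow_ne_zero _ hs
      funext i
      simp only [Pi.sub_apply, Pi.smul_apply, smul_eq_mul, grad_fcc]
      fin_cases i <;>
        simp only [Fin.reduceFinMk, Matrix.cons_val_zero, Matrix.cons_val_one, Matrix.head_cons,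
          Matrix.cons_val_two, Matrix.tail_cons] <;>
        rw [one_div, inv_mul_eq_div, eq_div_iff hD]
      · linear_combination (s ^ 2 * u 1 ^ 2 * u 2) * hg
      · first
          | ring
          | linear_combination (-(s ^ 2 * u 1 ^ 2 * u 2)) * hg
          | linear_combination (2 * s ^ 2 * u 1 ^ 2 * u 2) * hg
          | linear_combination (s ^ 2 * u 1 ^ 2 * u 2) * hg
      · first
          | ring
          | linear_combination (-(s ^ 2 * u 1 ^ 2 * u 2)) * hg
          | linear_combination (2 * s ^ 2 * u 1 ^ 2 * u 2) * hg
          | linear_combination (s ^ 2 * u 1 ^ 2 * u 2) * hg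
  · rw [eval_fcc]; simp
  · funext i
    rw [grad_fcc]
    fin_cases i <;> simp

/-- The polynomial map parameterizing (a dense subset of) the dual variety. -/
noncomputable def psiP : Fin 3 → MvPolynomial (Fin 2) ℂ :=
  ![C 3 * X 0 * X 1 ^ 2, C 2 * X 0 * X 1 ^ 3, X 0]

noncomputable def psiF : (Fin 2 → ℂ) → (Fin 3 → ℂ) := fun v i => eval v (psiP i)

lemma psiF_apply (v : Fin 2 → ℂ) :
    psiF v = ![3 * v 0 * v 1 ^ 2, 2 * v 0 * v 1 ^ 3, v 0] := by
  funext i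
  fin_cases i <;> simp [psiF, psiP]

lemma eval_bind₁' {m n : ℕ} (v : Fin m → ℂ) (g : Fin n → MvPolynomial (Fin m) ℂ)
    (p : MvPolynomial (Fin n) ℂ) :
    eval v (bind₁ g p) = eval (fun i => eval v (g i)) p :=
  eval₂Hom_bind₁ _ _ _ _

lemma psiF_mem_D (v : Fin 2 → ℂ) :
    psiF v ∈ {u : Fin 3 → ℂ | 4 * u 0 ^ 3 - 27 * u 1 ^ 2 * u 2 = 0} := by
  rw [psiF_apply]
  show 4 * (3 * v 0 * v 1 ^ 2) ^ 3 - 27 * (2 * v 0 * v 1 ^ 3) ^ 2 * v 0 = 0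
  ring

lemma D_sub_zclosure_range :
    {u : Fin 3 → ℂ | 4 * u 0 ^ 3 - 27 * u 1 ^ 2 * u 2 = 0} ⊆ zclosure (Set.range psiF) := by
  intro u hu
  have hu' : 4 * u 0 ^ 3 - 27 * u 1 ^ 2 * u 2 = 0 := hu
  by_cases h0 : u 0 = 0
  · by_cases h1 : u 1 = 0
    · apply subset_zclosure
      refine ⟨![u 2, 0], ?_⟩
      rw [psiF_apply]
      funext i
      fin_cases i <;>
        simp only [Fin.reduceFinMk, Matrix.cons_val_zero, Matrix.cons_val_one, Matrix.head_cons,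
          Matrix.cons_val_two, Matrix.tail_cons] <;>
        first
          | (rw [h0]; ring)
          | (rw [h1]; ring)
          | ring
    · -- u 0 = 0, u 1 ≠ 0, hence u 2 = 0
      have h2 : u 2 = 0 := by
        have : 27 * u 1 ^ 2 * u 2 = 0 := by rw [h0] at hu'; linear_combination -hu'
        rcases mul_eq_zero.mp this with h | h
        · rcases mul_eq_zero.mp h with h' | h'
          · norm_num at h'
          · exact absurd (pow_eq_zero_iff (by norm_num) |>.mp h') h1
        · exact h
      have key := curve_mem_zclosure (Set.range psiF)
        (fun s => ![3 * (u 1 * s) / 2, u 1, u 1 * s ^ 3 / 2]) ?_ ?_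
      · have : (![3 * (u 1 * 0) / 2, u 1, u 1 * 0 ^ 3 / 2] : Fin 3 → ℂ) = u := by
          funext i
          fin_cases i <;>
            simp only [Fin.reduceFinMk, Matrix.cons_val_zero, Matrix.cons_val_one,
              Matrix.head_cons, Matrix.cons_val_two, Matrix.tail_cons] <;>
            first
              | (rw [h0]; ring)
              | (rw [h2]; ring)
              | ring
        rwa [this] at key
      · intro i; fin_cases i <;> simp <;> fun_prop
      · intro s hs
        refine ⟨![u 1 * s ^ 3 / 2, s⁻¹], ?_⟩
        rw [psiF_apply]
        funext i
        fin_cases i <;>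
          simp only [Fin.reduceFinMk, Matrix.cons_val_zero, Matrix.cons_val_one,
            Matrix.head_cons, Matrix.cons_val_two, Matrix.tail_cons] <;>
          field_simp <;> ring
  · -- u 0 ≠ 0
    apply subset_zclosure
    refine ⟨![u 2, 3 * u 1 / (2 * u 0)], ?_⟩
    have hu1 : u 1 ≠ 0 := by
      intro h
      apply h0
      have h3 : u 0 ^ 3 = 0 := by rw [h] at hu'; linear_combination (1/4 : ℂ) * hu'
      exact pow_eq_zero_iff (by norm_num) |>.mp h3
    have hu2 : u 2 ≠ 0 := by
      intro h
      apply h0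
      have h3 : u 0 ^ 3 = 0 := by rw [h] at hu'; linear_combination (1/4 : ℂ) * hu'
      exact pow_eq_zero_iff (by norm_num) |>.mp h3
    rw [psiF_apply]
    funext i
    fin_cases i <;>
      simp only [Fin.reduceFinMk, Matrix.cons_val_zero, Matrix.cons_val_one,
        Matrix.head_cons, Matrix.cons_val_two, Matrix.tail_cons]
    · field_simp
      linear_combination -hu'
    · field_simp
      linear_combination -hu'

lemma isZIrreducible_D :
    IsZIrreducible {u : Fin 3 → ℂ | 4 * u 0 ^ 3 - 27 * u 1 ^ 2 * u 2 = 0} := by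
  constructor
  · exact ⟨0, by simp⟩
  · intro C₁ C₂ hC₁ hC₂ hsub
    by_contra hcon
    push_neg at hcon
    obtain ⟨hn1, hn2⟩ := hcon
    have him1 : ¬ (Set.range psiF ⊆ C₁) := fun h =>
      hn1 (D_sub_zclosure_range.trans (zclosure_subset_closed h hC₁))
    have him2 : ¬ (Set.range psiF ⊆ C₂) := fun h =>
      hn2 (D_sub_zclosure_range.trans (zclosure_subset_closed h hC₂))
    obtain ⟨y1, hy1r, hy1⟩ := Set.not_subset.mp him1
    obtain ⟨y2, hy2r, hy2⟩ := Set.not_subset.mp him2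
    obtain ⟨v, rfl⟩ := hy1r
    obtain ⟨w, rfl⟩ := hy2r
    rw [← hC₁] at hy1
    rw [← hC₂] at hy2
    simp only [zclosure, Set.mem_setOf_eq, not_forall] at hy1 hy2
    obtain ⟨p₁, hp₁, hne₁⟩ := hy1
    obtain ⟨p₂, hp₂, hne₂⟩ := hy2
    have hzero : ∀ z : Fin 2 → ℂ, eval z (bind₁ psiP p₁ * bind₁ psiP p₂) = 0 := by
      intro z
      rw [map_mul, eval_bind₁', eval_bind₁']
      have hz : psiF z ∈ C₁ ∪ C₂ := hsub (psiF_mem_D z)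
      rcases hz with h | h
      · rw [show (fun i => eval z (psiP i)) = psiF z from rfl, hp₁ _ h, zero_mul]
      · rw [show (fun i => eval z (psiP i)) = psiF z from rfl, hp₂ _ h, mul_zero]
    have hprod : bind₁ psiP p₁ * bind₁ psiP p₂ = 0 :=
      MvPolynomial.funext (fun z => by rw [hzero z, map_zero])
    rcases mul_eq_zero.mp hprod with h | h
    · apply hne₁
      have := congrArg (eval v) h
      rw [eval_bind₁', map_zero] at this
      exact this
    · apply hne₂
      have := congrArg (eval w) h
      rw [eval_bind₁', map_zero] at this
      exact this

/-- The ED data singular locus of the cuspidal cubic cone `V(x₁³ + x₂²x₃)` is the hypersurface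
`V(x₁(4x₁³ - 27x₂²x₃))`; in particular the dual variety `V(4x₁³ - 27x₂²x₃)` is an irreducible
component of it. -/
theorem DS_cuspidal_cubic :
    DS (X 0 ^ 3 + X 1 ^ 2 * X 2 : MvPolynomial (Fin 3) ℂ) =
      {u : Fin 3 → ℂ | u 0 * (4 * u 0 ^ 3 - 27 * u 1 ^ 2 * u 2) = 0} ∧
    IsIrredComponentOf {u : Fin 3 → ℂ | 4 * u 0 ^ 3 - 27 * u 1 ^ 2 * u 2 = 0}
      (DS (X 0 ^ 3 + X 1 ^ 2 * X 2 : MvPolynomial (Fin 3) ℂ)) := by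
  have main : DS (X 0 ^ 3 + X 1 ^ 2 * X 2 : MvPolynomial (Fin 3) ℂ) =
      {u : Fin 3 → ℂ | u 0 * (4 * u 0 ^ 3 - 27 * u 1 ^ 2 * u 2) = 0} := by
    apply subset_antisymm DS_sub
    intro u hu
    have hu' : u 0 * (4 * u 0 ^ 3 - 27 * u 1 ^ 2 * u 2) = 0 := hu
    rcases mul_eq_zero.mp hu' with h | h
    · by_cases h2 : u 2 = 0
      · exact case_A2 u h h2
      · exact case_A1 u h h2
    · by_cases h0 : u 0 = 0
      · by_cases h2 : u 2 = 0
        · exact case_A2 u h0 h2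
        · exact case_A1 u h0 h2
      · exact case_B u h0 h
  refine ⟨main, ?_, ?_, isZIrreducible_D, ?_⟩
  · -- the dual hypersurface is contained in DS
    rw [main]
    intro u hu
    have h : 4 * u 0 ^ 3 - 27 * u 1 ^ 2 * u 2 = 0 := hu
    show u 0 * _ = 0
    rw [h, mul_zero]
  · -- the dual hypersurface is Zariski closed
    have hset : {u : Fin 3 → ℂ | 4 * u 0 ^ 3 - 27 * u 1 ^ 2 * u 2 = 0}
        = {x : Fin 3 → ℂ |
            eval x (C 4 * X 0 ^ 3 - C 27 * X 1 ^ 2 * X 2 : MvPolynomial (Fin 3) ℂ) = 0} := by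
      ext x
      simp
    rw [hset]
    exact isZClosed_V _
  · -- maximality among irreducible closed subsets of DS
    intro C' hC'cl hC'irr hDC' hC'DS
    rw [main] at hC'DS
    have hsplit : C' ⊆ {u : Fin 3 → ℂ | eval u (X 0 : MvPolynomial (Fin 3) ℂ) = 0}
        ∪ {u : Fin 3 → ℂ |
            eval u (C 4 * X 0 ^ 3 - C 27 * X 1 ^ 2 * X 2 : MvPolynomial (Fin 3) ℂ) = 0} := by
      intro u hu
      rcases mul_eq_zero.mp (hC'DS hu) with h | h
      · left; simpa using h
      · right; simpa using h
    rcases hC'irr.2 _ _ (isZClosed_V _) (isZClosed_V _) hsplit with h | h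
    · exfalso
      have hmem : (![1, 1, 4/27] : Fin 3 → ℂ) ∈
          {u : Fin 3 → ℂ | 4 * u 0 ^ 3 - 27 * u 1 ^ 2 * u 2 = 0} := by
        show (4 : ℂ) * (![1, 1, 4/27] : Fin 3 → ℂ) 0 ^ 3 -
          27 * (![1, 1, 4/27] : Fin 3 → ℂ) 1 ^ 2 * (![1, 1, 4/27] : Fin 3 → ℂ) 2 = 0
        norm_num [Matrix.cons_val_two, Matrix.tail_cons, Matrix.head_cons]
      have hx := h (hDC' hmem)
      simp at hx
    · apply subset_antisymm _ hDC'
      intro u hu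
      have := h hu
      simpa using this
end

section
/- Let f = x1³ − x1x2² − x1x3² + 2x2x3x4 − x1x4² ∈ ℂ[x1,x2,x3,x4], the 3×3 symmetric determinant defining Cayley's cubic surface as a hypersurface in ℂ⁴. Then the dual variety is the quartic Steiner surface: V(f)* = V(x2²x3² − 2x1x2x3x4 + x2²x4² + x3²x4²). -/
open MvPolynomial Pointwise

noncomputable def fCay : MvPolynomial (Fin 4) ℂ :=
  X 0 ^ 3 - X 0 * X 1 ^ 2 - X 0 * X 2 ^ 2 + 2 * X 1 * X 2 * X 3 - X 0 * X 3 ^ 2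

noncomputable def pSt : MvPolynomial (Fin 4) ℂ :=
  X 1 ^ 2 * X 2 ^ 2 - 2 * X 0 * X 1 * X 2 * X 3 + X 1 ^ 2 * X 3 ^ 2 + X 2 ^ 2 * X 3 ^ 2

lemma two_eqC : (2 : MvPolynomial (Fin 4) ℂ) = C 2 := rfl

lemma gf0 (x : Fin 4 → ℂ) : grad fCay x 0 = 3 * x 0 ^ 2 - x 1 ^ 2 - x 2 ^ 2 - x 3 ^ 2 := by
  simp [grad, fCay, pderiv_X, two_eqC]; try ring
lemma gf1 (x : Fin 4 → ℂ) : grad fCay x 1 = 2 * (x 2 * x 3 - x 0 * x 1) := by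
  simp [grad, fCay, pderiv_X, two_eqC]; try ring
lemma gf2 (x : Fin 4 → ℂ) : grad fCay x 2 = 2 * (x 1 * x 3 - x 0 * x 2) := by
  simp [grad, fCay, pderiv_X, two_eqC]; try ring
lemma gf3 (x : Fin 4 → ℂ) : grad fCay x 3 = 2 * (x 1 * x 2 - x 0 * x 3) := by
  simp [grad, fCay, pderiv_X, two_eqC]; try ring

lemma evalf (x : Fin 4 → ℂ) :
    eval x fCay = x 0 ^ 3 - x 0 * x 1 ^ 2 - x 0 * x 2 ^ 2 + 2 * x 1 * x 2 * x 3 - x 0 * x 3 ^ 2 := by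
  simp [fCay]

lemma evalpg (s : Fin 4 → ℂ) :
    eval s pSt = s 1 ^ 2 * s 2 ^ 2 - 2 * s 0 * s 1 * s 2 * s 3 + s 1 ^ 2 * s 3 ^ 2
      + s 2 ^ 2 * s 3 ^ 2 := by
  simp [pSt]

lemma comp_eval (p : MvPolynomial (Fin 4) ℂ) (G : Fin 4 → Polynomial ℂ) (e : ℂ) :
    Polynomial.eval e (MvPolynomial.aeval G p) = eval (fun i => Polynomial.eval e (G i)) p := by
  have h : (Polynomial.aeval e : Polynomial ℂ →ₐ[ℂ] ℂ).comp (MvPolynomial.aeval G)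
      = MvPolynomial.aeval (fun i => Polynomial.eval e (G i)) := by
    apply MvPolynomial.algHom_ext
    intro i
    simp
  calc Polynomial.eval e (MvPolynomial.aeval G p)
      = ((Polynomial.aeval e : Polynomial ℂ →ₐ[ℂ] ℂ).comp (MvPolynomial.aeval G)) p := by
        simp [Polynomial.coe_aeval_eq_eval]
    _ = MvPolynomial.aeval (fun i => Polynomial.eval e (G i)) p := by rw [h]
    _ = eval (fun i => Polynomial.eval e (G i)) p := by
        rw [← MvPolynomial.coe_aeval_eq_eval]; rfl

noncomputable def Lq (a b c : ℂ) : Polynomial ℂ :=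
  Polynomial.C (2*a^2*b^2 + 2*a^2*c^2 + 2*b^2*c^2 - a^4 - b^4 - c^4)
  + Polynomial.C (4*c*(a^2 + b^2 - c^2)) * Polynomial.X
  + Polynomial.C (2*(a^2 + b^2) - 6*c^2) * Polynomial.X^2
  + Polynomial.C (-4*c) * Polynomial.X^3 - Polynomial.X^4

lemma Lq_ne (a b c : ℂ) : Lq a b c ≠ 0 := by
  intro h
  have h4 : (Lq a b c).coeff 4 = -1 := by
    simp only [Lq, Polynomial.coeff_add, Polynomial.coeff_sub, Polynomial.coeff_C_mul,
      Polynomial.coeff_C, Polynomial.coeff_X_pow]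
    norm_num
    right; simp [Polynomial.coeff_X]
  rw [h] at h4
  simp at h4

lemma Lq_eval (a b c e : ℂ) :
    Polynomial.eval e (Lq a b c)
      = 2*a^2*b^2 + 2*a^2*(c+e)^2 + 2*b^2*(c+e)^2 - a^4 - b^4 - (c+e)^4 := by
  simp [Lq]; ring

noncomputable def Gq (a b c : ℂ) : Fin 4 → Polynomial ℂ :=
  ![Polynomial.C (a^2+b^2) + (Polynomial.C c + Polynomial.X)^2,
    Polynomial.C (2*a*b),
    Polynomial.C (2*a) * (Polynomial.C c + Polynomial.X),
    Polynomial.C (2*b) * (Polynomial.C c + Polynomial.X)]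

lemma Gq0 (a b c e : ℂ) : Polynomial.eval e (Gq a b c 0) = a^2 + b^2 + (c+e)^2 := by
  simp [Gq]
lemma Gq1 (a b c e : ℂ) : Polynomial.eval e (Gq a b c 1) = 2*a*b := by simp [Gq]
lemma Gq2 (a b c e : ℂ) : Polynomial.eval e (Gq a b c 2) = 2*a*(c+e) := by simp [Gq]
lemma Gq3 (a b c e : ℂ) : Polynomial.eval e (Gq a b c 3) = 2*b*(c+e) := by simp [Gq]

noncomputable def xw (a b g : ℂ) : Fin 4 → ℂ :=
  ![2*a*b*g, g*(g^2 - a^2 - b^2), -b*(a^2 - b^2 + g^2), -a*(b^2 - a^2 + g^2)]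

lemma xw0 (a b g : ℂ) : xw a b g 0 = 2*a*b*g := by simp [xw]
lemma xw1 (a b g : ℂ) : xw a b g 1 = g*(g^2 - a^2 - b^2) := by simp [xw]
lemma xw2 (a b g : ℂ) : xw a b g 2 = -b*(a^2 - b^2 + g^2) := by simp [xw]
lemma xw3 (a b g : ℂ) : xw a b g 3 = -a*(b^2 - a^2 + g^2) := by simp [xw]

lemma sumsq (S P : ℂ) : ∃ b c : ℂ, b ^ 2 + c ^ 2 = S ∧ 2 * b * c = P := by
  obtain ⟨r, hr⟩ := IsAlgClosed.exists_pow_nat_eq (S^2 - P^2) (by norm_num : 0 < 2)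
  obtain ⟨b, hb⟩ := IsAlgClosed.exists_pow_nat_eq ((S + r)/2) (by norm_num : 0 < 2)
  obtain ⟨c, hc⟩ := IsAlgClosed.exists_pow_nat_eq ((S - r)/2) (by norm_num : 0 < 2)
  have hs : b ^ 2 + c ^ 2 = S := by rw [hb, hc]; ring
  have hsq : (2*b*c - P) * (2*b*c + P) = 0 := by
    have : (2*b*c)^2 = P^2 := by
      have : (2*b*c)^2 = 4 * ((S+r)/2) * ((S-r)/2) := by rw [← hb, ← hc]; ring
      rw [this]; linear_combination -hr
    linear_combination this
  rcases mul_eq_zero.mp hsq with h | h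
  · exact ⟨b, c, hs, by linear_combination h⟩
  · exact ⟨b, -c, by rw [← hs]; ring, by linear_combination -h⟩


lemma key (p : MvPolynomial (Fin 4) ℂ)
    (hp : ∀ s ∈ {y : Fin 4 → ℂ | ∃ (t : ℂ) (x : Fin 4 → ℂ), x ∈ RegL fCay ∧ y = t • grad fCay x},
      eval s p = 0)
    (a b c : ℂ) (y : Fin 4 → ℂ)
    (h0 : y 0 = a^2 + b^2 + c^2) (h1 : y 1 = 2*a*b) (h2 : y 2 = 2*a*c) (h3 : y 3 = 2*b*c) :
    eval y p = 0 := by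
  set Q : Polynomial ℂ := MvPolynomial.aeval (Gq a b c) p with hQdef
  have main : ∀ e : ℂ, Polynomial.eval e (Lq a b c) ≠ 0 → c + e ≠ 0 → Q.IsRoot e := by
    intro e hL hce
    set L := Polynomial.eval e (Lq a b c) with hLdef
    set x := xw a b (c + e) with hxdef
    have e0 : grad fCay x 0 = L * (a^2 + b^2 + (c+e)^2) := by
      rw [hxdef, gf0, xw0, xw1, xw2, xw3, hLdef, Lq_eval]; ring
    have e1 : grad fCay x 1 = L * (2*a*b) := by
      rw [hxdef, gf1, xw0, xw1, xw2, xw3, hLdef, Lq_eval]; ring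
    have e2 : grad fCay x 2 = L * (2*a*(c+e)) := by
      rw [hxdef, gf2, xw0, xw1, xw2, xw3, hLdef, Lq_eval]; ring
    have e3 : grad fCay x 3 = L * (2*b*(c+e)) := by
      rw [hxdef, gf3, xw0, xw1, xw2, xw3, hLdef, Lq_eval]; ring
    have hfx : eval x fCay = 0 := by
      rw [hxdef, evalf, xw0, xw1, xw2, xw3]; ring
    have hgrad : grad fCay x ≠ 0 := by
      intro hz
      have z2 : a * (c + e) = 0 := by
        have h' := congrFun hz 2; rw [e2] at h'
        have h'' := (mul_eq_zero.mp h').resolve_left hL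
        linear_combination h'' / 2
      have z3 : b * (c + e) = 0 := by
        have h' := congrFun hz 3; rw [e3] at h'
        have h'' := (mul_eq_zero.mp h').resolve_left hL
        linear_combination h'' / 2
      have ha : a = 0 := (mul_eq_zero.mp z2).resolve_right hce
      have hb : b = 0 := (mul_eq_zero.mp z3).resolve_right hce
      have z0 : a^2 + b^2 + (c+e)^2 = 0 := by
        have h' := congrFun hz 0; rw [e0] at h'
        exact (mul_eq_zero.mp h').resolve_left hL
      apply hce
      have : (c+e)^2 = 0 := by rw [ha, hb] at z0; linear_combination z0
      exact pow_eq_zero_iff (by norm_num) |>.mp this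
    have hs : (fun i => Polynomial.eval e (Gq a b c i)) = L⁻¹ • grad fCay x := by
      funext i
      rw [Pi.smul_apply, smul_eq_mul]
      fin_cases i
      · show Polynomial.eval e (Gq a b c 0) = L⁻¹ * grad fCay x 0
        rw [Gq0, e0, inv_mul_cancel_left₀ hL]
      · show Polynomial.eval e (Gq a b c 1) = L⁻¹ * grad fCay x 1
        rw [Gq1, e1, inv_mul_cancel_left₀ hL]
      · show Polynomial.eval e (Gq a b c 2) = L⁻¹ * grad fCay x 2
        rw [Gq2, e2, inv_mul_cancel_left₀ hL]
      · show Polynomial.eval e (Gq a b c 3) = L⁻¹ * grad fCay x 3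
        rw [Gq3, e3, inv_mul_cancel_left₀ hL]
    have := hp (fun i => Polynomial.eval e (Gq a b c i))
      ⟨L⁻¹, x, ⟨hfx, hgrad⟩, hs⟩
    unfold Polynomial.IsRoot
    rw [hQdef, comp_eval]
    exact this
  by_cases hQ : Q = 0
  · have h00 : (fun i => Polynomial.eval 0 (Gq a b c i)) = y := by
      funext i
      fin_cases i
      · show Polynomial.eval 0 (Gq a b c 0) = y 0
        rw [Gq0, h0]; ring
      · show Polynomial.eval 0 (Gq a b c 1) = y 1
        rw [Gq1, h1]
      · show Polynomial.eval 0 (Gq a b c 2) = y 2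
        rw [Gq2, h2]; ring
      · show Polynomial.eval 0 (Gq a b c 3) = y 3
        rw [Gq3, h3]; ring
    have hz : eval y p = Polynomial.eval 0 Q := by
      rw [hQdef, comp_eval, h00]
    rw [hz, hQ]
    simp
  · exfalso
    have hsub : (Set.univ : Set ℂ) ⊆
        {e : ℂ | Q.IsRoot e} ∪ ({e : ℂ | (Lq a b c).IsRoot e} ∪ {-c}) := by
      intro e _
      by_cases hL : Polynomial.eval e (Lq a b c) = 0
      · exact Or.inr (Or.inl hL)
      · by_cases hce : c + e = 0
        · right; right
          simp only [Set.mem_singleton_iff]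
          linear_combination hce
        · exact Or.inl (main e hL hce)
    have hfin : ((Set.univ : Set ℂ)).Finite :=
      Set.Finite.subset ((Polynomial.finite_setOf_isRoot hQ).union
        ((Polynomial.finite_setOf_isRoot (Lq_ne a b c)).union (Set.finite_singleton (-c)))) hsub
    exact Set.infinite_univ hfin

/-- The dual variety of Cayley's cubic `V(x₁³ - x₁x₂² - x₁x₃² + 2x₂x₃x₄ - x₁x₄²)` is the
quartic Steiner surface `V(x₂²x₃² - 2x₁x₂x₃x₄ + x₂²x₄² + x₃²x₄²)`. -/
theorem dual_cayley_cubic :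
    dualV (X 0 ^ 3 - X 0 * X 1 ^ 2 - X 0 * X 2 ^ 2 + 2 * X 1 * X 2 * X 3 - X 0 * X 3 ^ 2 :
        MvPolynomial (Fin 4) ℂ) =
      {y : Fin 4 → ℂ |
        y 1 ^ 2 * y 2 ^ 2 - 2 * y 0 * y 1 * y 2 * y 3 + y 1 ^ 2 * y 3 ^ 2 + y 2 ^ 2 * y 3 ^ 2
          = 0} := by
  show dualV fCay = _
  ext y
  simp only [dualV, zclosure, Set.mem_setOf_eq]
  constructor
  · intro hy
    have hv := hy pSt ?_
    · rw [evalpg] at hv; exact hv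
    · intro s hs
      obtain ⟨t, x, ⟨hfx, -⟩, rfl⟩ := hs
      rw [evalf] at hfx
      rw [evalpg]
      simp only [Pi.smul_apply, smul_eq_mul]
      rw [gf0, gf1, gf2, gf3]
      linear_combination (t^4 * (16*(x 1*x 2*x 3^3 + x 1*x 2^3*x 3 + x 1^3*x 2*x 3)
        - 32*(x 0*x 2^2*x 3^2 + x 0*x 1^2*x 3^2 + x 0*x 1^2*x 2^2)
        + 48*x 0^2*x 1*x 2*x 3)) * hfx
  · intro hy p hp
    by_cases h1 : y 1 = 0
    · by_cases h2 : y 2 = 0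
      · -- a = 0 case
        obtain ⟨b, c, hbc, hP⟩ := sumsq (y 0) (y 3)
        exact key p hp 0 b c y (by rw [← hbc]; ring) (by simp [h1]) (by simp [h2])
          hP.symm
      · -- y 1 = 0, y 2 ≠ 0 : from hy, y 3 = 0
        have hsq : (y 2 * y 3)^2 = 0 := by
          linear_combination hy - (y 1*(y 2)^2 + y 1*(y 3)^2 - 2*(y 0)*(y 2)*(y 3))*h1
        have h3 : y 3 = 0 := by
          have := pow_eq_zero_iff (n := 2) (by norm_num) |>.mp hsq
          exact (mul_eq_zero.mp this).resolve_left h2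
        obtain ⟨a, c, hac, hP⟩ := sumsq (y 0) (y 2)
        exact key p hp a 0 c y (by rw [← hac]; ring) (by simp [h1])
          hP.symm (by simp [h3])
    · by_cases h2 : y 2 = 0
      · -- y 2 = 0, y 1 ≠ 0 : y 3 = 0
        have hsq : (y 1 * y 3)^2 = 0 := by
          linear_combination hy + (2*y 0*y 1*y 3 - y 1^2*y 2 - y 2*y 3^2)*h2
        have h3 : y 3 = 0 := by
          have := pow_eq_zero_iff (n := 2) (by norm_num) |>.mp hsq
          exact (mul_eq_zero.mp this).resolve_left h1
        obtain ⟨a, b, hab, hP⟩ := sumsq (y 0) (y 1)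
        exact key p hp a b 0 y (by rw [← hab]; ring) hP.symm
          (by simp [h2]) (by simp [h3])
      · by_cases h3 : y 3 = 0
        · exfalso
          have : (y 1 * y 2)^2 = 0 := by
            linear_combination hy - ((y 1)^2*(y 3) + (y 2)^2*(y 3) - 2*(y 0)*(y 1)*(y 2))*h3
          have := pow_eq_zero_iff (n := 2) (by norm_num) |>.mp this
          rcases mul_eq_zero.mp this with h | h
          exacts [h1 h, h2 h]
        · -- generic case
          obtain ⟨a, ha⟩ := IsAlgClosed.exists_pow_nat_eq (y 1 * y 2 / (2 * y 3))
            (by norm_num : 0 < 2)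
          have h2y3 : (2:ℂ) * y 3 ≠ 0 := mul_ne_zero two_ne_zero h3
          have ha' : 2 * y 3 * a ^ 2 = y 1 * y 2 := by
            rw [ha, mul_div_assoc']
            field_simp
          have ha0 : a ≠ 0 := by
            intro h
            rw [h] at ha'
            have hz : y 1 * y 2 = 0 := by linear_combination -ha'
            rcases mul_eq_zero.mp hz with h' | h'
            exacts [h1 h', h2 h']
          have key1 : y 3 ^ 2 * (4*a^2*y 0) = y 3 ^ 2 * (4*a^4 + y 1^2 + y 2^2) := by
            linear_combination (-1 : ℂ)*hy + (2*y 0*y 3 - 2*a^2*y 3 - y 1*y 2)*ha'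
          have key0 : 4*a^2*y 0 = 4*a^4 + y 1^2 + y 2^2 :=
            mul_left_cancel₀ (pow_ne_zero 2 h3) key1
          refine key p hp a (y 1 / (2*a)) (y 2 / (2*a)) y ?_ ?_ ?_ ?_
          · field_simp
            linear_combination key0
          · field_simp
          · field_simp
          · field_simp
            linear_combination ha'
end
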